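/- Let 𝒳, 𝒴, C be types, g : 𝒳 → 𝒳 → C a comparison function, f_r : C × C × 𝒴 × 𝒴 → ℝ^{d_rel} a relational encoder, and define the full relational encoding ρ_full(x★; x, y) = Σ_{n=1}^{N} Σ_{n'=1}^{N} f_r(g(x_n, x★), g(x_n, x_{n'}), y_n, y_{n'}). If τ : 𝒳 → 𝒳 satisfies g(τ a, τ b) = g(a, b) for all a, b : 𝒳, then for all x : Fin N → 𝒳, y : Fin N → 𝒴, and x★ : 𝒳, ρ_full(τ x★; τ ∘ x, y) = ρ_full(x★; x, y). -/
import Mathlib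


open scoped BigOperators

/-- The full relational encoding. -/
noncomputable def rhoFull {𝒳 𝒴 C : Type*} {N dRel : ℕ}
    (g : 𝒳 → 𝒳 → C) (fr : C × C × 𝒴 × 𝒴 → EuclideanSpace ℝ (Fin dRel))
    (xstar : 𝒳) (x : Fin N → 𝒳) (y : Fin N → 𝒴) : EuclideanSpace ℝ (Fin dRel) :=
  ∑ n : Fin N, ∑ n' : Fin N, fr (g (x n) xstar, g (x n) (x n'), y n, y n')

/-- the full relational encoding is invariant under any map `τ`
that leaves the comparison function invariant. -/
theorem rhoFull_invariant {𝒳 𝒴 C : Type*} {N dRel : ℕ}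
    (g : 𝒳 → 𝒳 → C) (fr : C × C × 𝒴 × 𝒴 → EuclideanSpace ℝ (Fin dRel))
    (τ : 𝒳 → 𝒳) (hτ : ∀ a b : 𝒳, g (τ a) (τ b) = g a b) :
    ∀ (x : Fin N → 𝒳) (y : Fin N → 𝒴) (xstar : 𝒳),
      rhoFull g fr (τ xstar) (τ ∘ x) y = rhoFull g fr xstar x y := by
  intro x y xstar
  simp [rhoFull, Function.comp, hτ]
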